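/- Exponential-decay corollary of the reverse Grönwall inequality: let p > ε > 0, a ≥ 0, and let u : [A,B] → ℝ be continuous and nonnegative with u(t) ≤ a·e^{−pt} + ε ∫_t^B u(τ) dτ for all t ∈ [A,B]. Then u(t) ≤ (a·p/(p−ε))·e^{−pt} for all t ∈ [A,B]. -/

import Mathlib

/-- Exponential-decay corollary of the reverse Grönwall inequality. -/
theorem exp_decay_reverse_gronwall
    (A B a ε p : ℝ) (hAB : A ≤ B) (hε : 0 < ε) (hεp : ε < p) (ha : 0 ≤ a)
    (u : ℝ → ℝ)
    (hu : ContinuousOn u (Set.Icc A B))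
    (hu0 : ∀ t ∈ Set.Icc A B, 0 ≤ u t)
    (hineq : ∀ t ∈ Set.Icc A B,
      u t ≤ a * Real.exp (-p * t) + ε * ∫ τ in t..B, u τ) :
    ∀ t ∈ Set.Icc A B, u t ≤ (a * p / (p - ε)) * Real.exp (-p * t) := by
  have hpε : 0 < p - ε := by linarith
  set v : ℝ → ℝ := fun t => ∫ τ in t..B, u τ with hv
  have hint : MeasureTheory.IntegrableOn u (Set.uIcc A B) MeasureTheory.volume := by
    rw [Set.uIcc_of_le hAB]
    exact hu.integrableOn_Icc
  have hvcont : ContinuousOn v (Set.Icc A B) := by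
    have := intervalIntegral.continuousOn_primitive_interval_left hint
    rwa [Set.uIcc_of_le hAB] at this
  -- w t = exp (ε t) * v t - (a/(p-ε)) * exp ((ε - p) t) is monotone on [A,B]
  set w : ℝ → ℝ := fun t => Real.exp (ε * t) * v t - a / (p - ε) * Real.exp ((ε - p) * t)
    with hw
  have hwderiv : ∀ t ∈ Set.Ioo A B,
      HasDerivAt w (ε * Real.exp (ε * t) * v t - Real.exp (ε * t) * u t
        + a * Real.exp ((ε - p) * t)) t := by
    intro t ht
    have ht' : t ∈ Set.Icc A B := Set.Ioo_subset_Icc_self ht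
    have hvi : IntervalIntegrable u MeasureTheory.volume t B := by
      apply ContinuousOn.intervalIntegrable
      apply hu.mono
      rw [Set.uIcc_of_le ht'.2]
      exact Set.Icc_subset_Icc ht'.1 le_rfl
    have hcat : ContinuousAt u t :=
      hu.continuousAt (Icc_mem_nhds ht.1 ht.2)
    have hdv : HasDerivAt v (-u t) t :=
      intervalIntegral.integral_hasDerivAt_left hvi
        ⟨Set.Icc A B, Icc_mem_nhds ht.1 ht.2,
          hu.aestronglyMeasurable measurableSet_Icc⟩ hcat
    have h1 : HasDerivAt (fun t => Real.exp (ε * t)) (ε * Real.exp (ε * t)) t := by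
      simpa [mul_comm] using ((hasDerivAt_id t).const_mul ε).exp
    have h2 : HasDerivAt (fun t => Real.exp ((ε - p) * t))
        ((ε - p) * Real.exp ((ε - p) * t)) t := by
      simpa [mul_comm] using ((hasDerivAt_id t).const_mul (ε - p)).exp
    have := (h1.mul hdv).sub (h2.const_mul (a / (p - ε)))
    refine HasDerivAt.congr_deriv this ?_
    have hk : a / (p - ε) * (p - ε) = a := div_mul_cancel₀ a hpε.ne'
    linear_combination (Real.exp ((ε - p) * t)) * hk
  have hwmono : MonotoneOn w (Set.Icc A B) := by
    apply monotoneOn_of_deriv_nonneg (convex_Icc A B)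
    · exact ((Real.continuous_exp.comp (continuous_const.mul continuous_id)).continuousOn.mul
        hvcont).sub (Continuous.continuousOn (by continuity))
    · rw [interior_Icc]
      intro t ht
      exact (hwderiv t ht).differentiableAt.differentiableWithinAt
    · rw [interior_Icc]
      intro t ht
      rw [(hwderiv t ht).deriv]
      have ht' : t ∈ Set.Icc A B := Set.Ioo_subset_Icc_self ht
      have h := hineq t ht'
      have hexp : Real.exp (ε * t) * Real.exp (-p * t) = Real.exp ((ε - p) * t) := by
        rw [← Real.exp_add]; ring_nf
      nlinarith [Real.exp_pos (ε * t), Real.exp_pos ((ε - p) * t),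
        mul_le_mul_of_nonneg_left h (Real.exp_pos (ε * t)).le]
  -- hence w t ≤ w B, i.e. v t ≤ (a/(p-ε)) exp(-p t)
  have hvbound : ∀ t ∈ Set.Icc A B, v t ≤ a / (p - ε) * Real.exp (-p * t) := by
    intro t ht
    have hB : B ∈ Set.Icc A B := Set.right_mem_Icc.2 hAB
    have := hwmono ht hB ht.2
    have hvB : v B = 0 := intervalIntegral.integral_same
    rw [hw] at this
    simp only [hvB, mul_zero, zero_sub] at this
    have hexp : Real.exp ((ε - p) * t) = Real.exp (ε * t) * Real.exp (-p * t) := by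
      rw [← Real.exp_add]; ring_nf
    have h2 : Real.exp (ε * t) * v t ≤ a / (p - ε) * Real.exp ((ε - p) * t) := by
      nlinarith [Real.exp_pos ((ε - p) * B), div_nonneg ha hpε.le]
    rw [hexp] at h2
    have hepos := Real.exp_pos (ε * t)
    calc v t = Real.exp (ε * t) * v t / Real.exp (ε * t) := by field_simp
    _ ≤ a / (p - ε) * (Real.exp (ε * t) * Real.exp (-p * t)) / Real.exp (ε * t) := by
        apply div_le_div_of_nonneg_right _ hepos.le
        · linarith [h2]
    _ = a / (p - ε) * Real.exp (-p * t) := by field_simp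
  intro t ht
  have h := hineq t ht
  have h2 := hvbound t ht
  have := Real.exp_pos (-p * t)
  have : ε * v t ≤ ε * (a / (p - ε) * Real.exp (-p * t)) :=
    mul_le_mul_of_nonneg_left h2 hε.le
  have heq : a * Real.exp (-p * t) + ε * (a / (p - ε) * Real.exp (-p * t))
      = (a * p / (p - ε)) * Real.exp (-p * t) := by
    field_simp
    ring
  linarith
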